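/- arXiv:2007.13782 — 2 statements merged into one kernel-verified Lean document; each statement's English description precedes it below -/
import Mathlib

section
/- If T is a consistent tree system in a connected graph G and e is an edge contained in every tree of T, then the collection of contracted trees {T/e : T ∈ T}, with the trees rooted at the two endpoints of e identified, is a consistent tree system in the contracted graph G/e. -/
open SimpleGraph

variable {V : Type*}

/-- Total weight of a walk: sum of the weights of its edges. -/
def walkWeight {G : SimpleGraph V} (w : Sym2 V → ℝ) {u v : V} (p : G.Walk u v) : ℝ :=
  (p.edges.map w).sum

/-- A path system: a choice of a simple path between every (ordered) pair of vertices. -/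
def IsPathSystem (G : SimpleGraph V) (P : ∀ u v : V, G.Walk u v) : Prop :=
  ∀ u v, (P u v).IsPath

/-- Consistency: any subpath of a chosen path is itself a chosen path. -/
def Consistent (G : SimpleGraph V) (P : ∀ u v : V, G.Walk u v) : Prop :=
  ∀ (u v x y : V) (r : G.Walk u x) (q : G.Walk x y) (s : G.Walk y v),
    P u v = r.append (q.append s) → q = P x y

/-- `w` induces `P`: every chosen path is a `w`-shortest path between its endpoints. -/
def Induces (G : SimpleGraph V) (w : Sym2 V → ℝ) (P : ∀ u v : V, G.Walk u v) : Prop :=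
  ∀ (u v : V) (Q : G.Walk u v), Q.IsPath → walkWeight w (P u v) ≤ walkWeight w Q

/-- `w` strictly induces `P`: every chosen path is the unique `w`-shortest path. -/
def StrictlyInduces (G : SimpleGraph V) (w : Sym2 V → ℝ) (P : ∀ u v : V, G.Walk u v) : Prop :=
  ∀ (u v : V) (Q : G.Walk u v), Q.IsPath → Q ≠ P u v →
    walkWeight w (P u v) < walkWeight w Q

/-- A graph is metrizable if every consistent path system in it is induced by a
positive edge weight function. -/
def Metrizable (G : SimpleGraph V) : Prop :=
  ∀ P : ∀ u v : V, G.Walk u v, IsPathSystem G P → Consistent G P →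
    ∃ w : Sym2 V → ℝ, (∀ e ∈ G.edgeSet, 0 < w e) ∧ Induces G w P

/-- A graph is strictly metrizable if every consistent path system in it is strictly
induced by a positive edge weight function. -/
def StrictlyMetrizable (G : SimpleGraph V) : Prop :=
  ∀ P : ∀ u v : V, G.Walk u v, IsPathSystem G P → Consistent G P →
    ∃ w : Sym2 V → ℝ, (∀ e ∈ G.edgeSet, 0 < w e) ∧ StrictlyInduces G w P

/-- A tree system: a spanning tree `T u` of `G` for every root `u`. -/
def IsTreeSystem {W : Type*} (G : SimpleGraph W) (T : W → SimpleGraph W) : Prop :=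
  ∀ u, T u ≤ G ∧ (T u).IsTree

/-- Consistency of a tree system: for all `u v`, the `uv`-path in `T u` and the
`uv`-path in `T v` coincide (as edge lists). -/
def TreeConsistent {W : Type*} (T : W → SimpleGraph W) : Prop :=
  ∀ (u v : W) (p : (T u).Walk u v) (q : (T v).Walk u v),
    p.IsPath → q.IsPath → p.edges = q.edges

/-- The projection collapsing `y` onto `x`. -/
def proj [DecidableEq V] (x y : V) (hxy : x ≠ y) (z : V) : {z : V // z ≠ y} :=
  if h : z = y then ⟨x, hxy⟩ else ⟨z, h⟩

/-- The graph obtained from `G` by contracting the edge `xy` (identifying `y` with `x`). -/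
def contract [DecidableEq V] (G : SimpleGraph V) (x y : V) (hxy : x ≠ y) :
    SimpleGraph {z : V // z ≠ y} :=
  SimpleGraph.fromRel (fun a b =>
    ∃ a' b' : V, G.Adj a' b' ∧ proj x y hxy a' = a ∧ proj x y hxy b' = b)

section helpers
variable [DecidableEq V] {x y : V} {hxy : x ≠ y} {S : SimpleGraph V}

lemma proj_eq_iff (z w : V) : proj x y hxy z = proj x y hxy w ↔
    z = w ∨ (z = x ∧ w = y) ∨ (z = y ∧ w = x) := by
  unfold proj
  split_ifs with h1 h2 h2 <;> simp_all [Subtype.ext_iff] <;> tauto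

lemma proj_val_ne (z : V) (hz : z ≠ y) : proj x y hxy z = ⟨z, hz⟩ := by
  simp [proj, hz]

lemma contract_adj {a b : {z : V // z ≠ y}} :
    (contract S x y hxy).Adj a b ↔ a ≠ b ∧
      ∃ a' b', S.Adj a' b' ∧ proj x y hxy a' = a ∧ proj x y hxy b' = b := by
  constructor
  · rintro ⟨hne, (⟨a',b',h,ha,hb⟩|⟨a',b',h,ha,hb⟩)⟩
    exacts [⟨hne, a', b', h, ha, hb⟩, ⟨hne, b', a', h.symm, hb, ha⟩]
  · rintro ⟨hne, a', b', h, ha, hb⟩; exact ⟨hne, Or.inl ⟨a',b',h,ha,hb⟩⟩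

lemma contract_adj_of_adj {a b : V} (h : S.Adj a b)
    (hne : proj x y hxy a ≠ proj x y hxy b) :
    (contract S x y hxy).Adj (proj x y hxy a) (proj x y hxy b) :=
  contract_adj.mpr ⟨hne, a, b, h, rfl, rfl⟩

lemma sym2_eq_of_proj_eq {a b : V} (h : S.Adj a b)
    (he : proj x y hxy a = proj x y hxy b) : s(a, b) = s(x, y) := by
  rcases (proj_eq_iff a b).mp he with rfl | ⟨rfl, rfl⟩ | ⟨rfl, rfl⟩
  · exact absurd rfl h.ne
  · rfl
  · exact Sym2.eq_swap

lemma proj_eq_of_sym2_eq {a c : V} (hc : s(a, c) = s(x, y)) :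
    proj x y hxy a = proj x y hxy c := by
  rcases Sym2.eq_iff.mp hc with ⟨rfl, rfl⟩ | ⟨rfl, rfl⟩ <;>
    exact (proj_eq_iff _ _).mpr (by tauto)

end helpers

section projwalk
variable [DecidableEq V] {x y : V} {S : SimpleGraph V}

def projWalk (hxy : x ≠ y) : ∀ {a b : V}, S.Walk a b →
    (contract S x y hxy).Walk (proj x y hxy a) (proj x y hxy b)
  | _, _, .nil => .nil
  | _, _, .cons h p =>
    if hac : proj x y hxy _ = proj x y hxy _ then (projWalk hxy p).copy hac.symm rfl
    else .cons (contract_adj_of_adj h hac) (projWalk hxy p)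

variable {hxy : x ≠ y}

lemma edges_projWalk : ∀ {a b : V} (p : S.Walk a b),
    (projWalk hxy p).edges = p.edges.filterMap
      (fun e => if e = s(x, y) then none else some (e.map (fun z => proj x y hxy z)))
  | _, _, .nil => rfl
  | _, _, @SimpleGraph.Walk.cons _ _ a c b h p => by
    rw [projWalk]
    split_ifs with hac
    · rw [SimpleGraph.Walk.edges_copy, SimpleGraph.Walk.edges_cons, List.filterMap_cons,
        if_pos (sym2_eq_of_proj_eq h hac), edges_projWalk p]
    · have hne : s(a, c) ≠ s(x, y) := fun hc => hac (proj_eq_of_sym2_eq hc)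
      rw [SimpleGraph.Walk.edges_cons, SimpleGraph.Walk.edges_cons, List.filterMap_cons,
        if_neg hne, edges_projWalk p, Sym2.map_pair_eq]

lemma support_projWalk_subset : ∀ {a b : V} (p : S.Walk a b) (z : {z : V // z ≠ y}),
    z ∈ (projWalk hxy p).support → ∃ w ∈ p.support, proj x y hxy w = z
  | _, _, .nil, z, hz => by
    simp only [projWalk, SimpleGraph.Walk.support_nil, List.mem_singleton] at hz
    exact ⟨_, by simp, hz.symm⟩
  | _, _, @SimpleGraph.Walk.cons _ _ a c b h p, z, hz => by
    rw [projWalk] at hz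
    split_ifs at hz with hac
    · rw [SimpleGraph.Walk.support_copy] at hz
      obtain ⟨w, hw, hw'⟩ := support_projWalk_subset p z hz
      exact ⟨w, by simp [hw], hw'⟩
    · rw [SimpleGraph.Walk.support_cons] at hz
      rcases List.mem_cons.mp hz with rfl | hz
      · exact ⟨a, by simp, rfl⟩
      · obtain ⟨w, hw, hw'⟩ := support_projWalk_subset p z hz
        exact ⟨w, by simp [hw], hw'⟩

lemma isPath_projWalk : ∀ {a b : V} (p : S.Walk a b), p.IsPath →
    (x ∈ p.support → y ∈ p.support → s(x, y) ∈ p.edges) → (projWalk hxy p).IsPath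
  | _, _, .nil, _, _ => by simp [projWalk]
  | _, _, @SimpleGraph.Walk.cons _ _ a c b h p, hp, hmem => by
    rw [SimpleGraph.Walk.cons_isPath_iff] at hp
    rw [projWalk]
    split_ifs with hac
    · rw [SimpleGraph.Walk.isPath_copy]
      refine isPath_projWalk p hp.1 ?_
      intro hx hy
      rcases (proj_eq_iff a c).mp hac with rfl | ⟨rfl, rfl⟩ | ⟨rfl, rfl⟩
      · exact absurd rfl h.ne
      · exact absurd hx hp.2
      · exact absurd hy hp.2
    · rw [SimpleGraph.Walk.cons_isPath_iff]
      refine ⟨isPath_projWalk p hp.1 ?_, ?_⟩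
      · intro hx hy
        have := hmem (by simp [hx]) (by simp [hy])
        rw [SimpleGraph.Walk.edges_cons, List.mem_cons] at this
        rcases this with hxy' | h'
        · exact absurd (proj_eq_of_sym2_eq hxy'.symm) hac
        · exact h'
      · intro hmem'
        obtain ⟨w, hw, hw'⟩ := support_projWalk_subset p _ hmem'
        rcases (proj_eq_iff w a).mp hw' with rfl | ⟨rfl, rfl⟩ | ⟨rfl, rfl⟩
        · exact hp.2 hw
        · -- w = x, a = y : x ∈ p.support
          have := hmem (by simp [hw]) (by simp)
          rw [SimpleGraph.Walk.edges_cons, List.mem_cons] at this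
          rcases this with hxy' | h'
          · exact hac (proj_eq_of_sym2_eq hxy'.symm)
          · exact hp.2 (SimpleGraph.Walk.snd_mem_support_of_mem_edges p h')
        · -- w = y, a = x
          have := hmem (by simp) (by simp [hw])
          rw [SimpleGraph.Walk.edges_cons, List.mem_cons] at this
          rcases this with hxy' | h'
          · exact hac (proj_eq_of_sym2_eq hxy'.symm)
          · exact hp.2 (SimpleGraph.Walk.fst_mem_support_of_mem_edges p h')

end projwalk

section tree
variable [DecidableEq V] {S : SimpleGraph V}

lemma path_eq_of_isPath (hS : S.IsAcyclic) {a b : V} {p q : S.Walk a b}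
    (hp : p.IsPath) (hq : q.IsPath) : p = q :=
  Subtype.ext_iff.mp (hS.path_unique ⟨p, hp⟩ ⟨q, hq⟩)

lemma mem_edges_of_mem_support (hS : S.IsAcyclic) {x y : V} (hxy : S.Adj x y) {a b : V}
    {p : S.Walk a b} (hp : p.IsPath) (hx : x ∈ p.support) (hy : y ∈ p.support) :
    s(x, y) ∈ p.edges := by
  rw [← p.take_spec hx, SimpleGraph.Walk.mem_support_append_iff] at hy
  rcases hy with hy | hy
  · -- y occurs before x : path y → x inside takeUntil
    have hd : ((p.takeUntil x hx).dropUntil y hy).IsPath := (hp.takeUntil hx).dropUntil hy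
    have heq := path_eq_of_isPath hS hd (SimpleGraph.Path.singleton hxy.symm).2
    have : s(y, x) ∈ ((p.takeUntil x hx).dropUntil y hy).edges := by
      rw [heq]; simp [SimpleGraph.Path.singleton]
    rw [Sym2.eq_swap] at this
    exact (p.edges_takeUntil_subset hx) (((p.takeUntil x hx).edges_dropUntil_subset hy) this)
  · have hd : ((p.dropUntil x hx).takeUntil y hy).IsPath := (hp.dropUntil hx).takeUntil hy
    have heq := path_eq_of_isPath hS hd (SimpleGraph.Path.singleton hxy).2
    have : s(x, y) ∈ ((p.dropUntil x hx).takeUntil y hy).edges := by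
      rw [heq]; simp [SimpleGraph.Path.singleton]
    exact (p.edges_dropUntil_subset hx) (((p.dropUntil x hx).edges_takeUntil_subset hy) this)

lemma edges_path_from_adj (hS : S.IsAcyclic) {x y c : V} (hxy : S.Adj x y)
    {q : S.Walk x c} {r : S.Walk y c} (hq : q.IsPath) (hr : r.IsPath) :
    q.edges ⊆ s(x, y) :: r.edges := by
  by_cases hx : x ∈ r.support
  · have heq := path_eq_of_isPath hS hq (hr.dropUntil hx)
    rw [heq]
    exact fun e he => List.mem_cons_of_mem _ (r.edges_dropUntil_subset hx he)
  · have hc : (SimpleGraph.Walk.cons hxy r).IsPath := hr.cons hx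
    have heq := path_eq_of_isPath hS hq hc
    rw [heq, SimpleGraph.Walk.edges_cons]
    exact fun e he => he

lemma exists_path_with_edge (hS : S.IsTree) {a b : V} (hab : S.Adj a b) (r : V) :
    ∃ (c : V) (p : S.Walk r c), p.IsPath ∧ s(a, b) ∈ p.edges := by
  obtain ⟨p, hp, -⟩ := hS.existsUnique_path r b
  by_cases ha : a ∈ p.support
  · refine ⟨b, p, hp, ?_⟩
    have hd : (p.dropUntil a ha).IsPath := hp.dropUntil ha
    have heq := path_eq_of_isPath hS.IsAcyclic hd (SimpleGraph.Path.singleton hab).2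
    have : s(a, b) ∈ (p.dropUntil a ha).edges := by
      rw [heq]; simp [SimpleGraph.Path.singleton]
    exact p.edges_dropUntil_subset ha this
  · refine ⟨a, p.concat hab.symm, ?_, ?_⟩
    · rw [← SimpleGraph.Walk.isPath_reverse_iff, SimpleGraph.Walk.reverse_concat]
      refine hp.reverse.cons ?_
      rw [SimpleGraph.Walk.support_reverse, List.mem_reverse]
      exact ha
    · rw [SimpleGraph.Walk.edges_concat, Sym2.eq_swap]
      simp

end tree

section lift
variable [DecidableEq V] {x y : V} {S : SimpleGraph V} {hxy : x ≠ y}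

lemma proj_val (z : {z : V // z ≠ y}) : proj x y hxy z.val = z :=
  Subtype.ext (by simp [proj, z.prop])

lemma reachable_proj (hS : S.Adj x y) (z : V) :
    S.Reachable ((proj x y hxy z).val) z := by
  unfold proj
  split_ifs with h
  · subst h; exact hS.reachable
  · rfl

lemma reachable_of_contract_walk (hS : S.Adj x y) :
    ∀ {a b : {z : V // z ≠ y}} (_ : (contract S x y hxy).Walk a b),
      S.Reachable a.val b.val
  | _, _, .nil => .refl _
  | _, _, .cons h p => by
    obtain ⟨hne, a', b', hab, ha, hb⟩ := contract_adj.mp h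
    have h1 : S.Reachable _ a' := ha ▸ reachable_proj hS a'
    have h2 : S.Reachable _ b' := hb ▸ reachable_proj hS b'
    exact ((h1.trans hab.reachable).trans h2.symm).trans (reachable_of_contract_walk hS p)

lemma contract_sdiff_le {a' b' : V} :
    ((contract S x y hxy) \ fromEdgeSet {s(proj x y hxy a', proj x y hxy b')}) ≤
      contract (S \ fromEdgeSet {s(a', b')}) x y hxy := by
  intro u v huv
  rw [SimpleGraph.sdiff_adj, fromEdgeSet_adj] at huv
  obtain ⟨h1, h2⟩ := huv
  obtain ⟨hne, c, d, hcd, hc, hd⟩ := contract_adj.mp h1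
  refine contract_adj.mpr ⟨hne, c, d, ?_, hc, hd⟩
  rw [SimpleGraph.sdiff_adj, fromEdgeSet_adj]
  refine ⟨hcd, fun hmem => h2 ?_⟩
  obtain ⟨he, -⟩ := hmem
  rw [Set.mem_singleton_iff] at he
  have := congrArg (Sym2.map (proj x y hxy)) he
  rw [Sym2.map_pair_eq, Sym2.map_pair_eq] at this
  rw [← hc, ← hd]
  exact ⟨this, by rw [hc, hd]; exact hne⟩

end lift

/-- contracting a persistent edge of a consistent tree system yields a
consistent tree system of the contracted graph (the trees rooted at the two endpoints
of the contracted edge being identified). -/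
theorem contract_persistent_edge_tree_system
    [Fintype V] [DecidableEq V] (G : SimpleGraph V) (hconn : G.Connected)
    (T : V → SimpleGraph V) (hT : IsTreeSystem G T) (hTcons : TreeConsistent T)
    (x y : V) (hadj : G.Adj x y) (hpers : ∀ u, (T u).Adj x y) :
    IsTreeSystem (contract G x y hadj.ne) (fun u => contract (T u.val) x y hadj.ne) ∧
    TreeConsistent (fun u : {z : V // z ≠ y} => contract (T u.val) x y hadj.ne) ∧
    contract (T x) x y hadj.ne = contract (T y) x y hadj.ne := by
  have hxy : x ≠ y := hadj.ne
  -- transfer of non-contracted edges between the trees at the two endpoints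
  have key : ∀ s t : V, (∀ c, (T c).Adj s t) → ∀ a b : V, (T s).Adj a b →
      s(a, b) ≠ s(s, t) → (T t).Adj a b := by
    intro s t hst a b hab hne
    obtain ⟨c, p, hp, hmem⟩ := exists_path_with_edge (hT s).2 hab s
    obtain ⟨q0⟩ := (hT c).2.isConnected.preconnected s c
    obtain ⟨r0⟩ := (hT c).2.isConnected.preconnected t c
    obtain ⟨r1⟩ := (hT t).2.isConnected.preconnected t c
    have hpq := hTcons s c p q0.toPath.1 hp q0.toPath.2
    have hsub := edges_path_from_adj (hT c).2.IsAcyclic (hst c) q0.toPath.2 r0.toPath.2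
    have hmem2 : s(a, b) ∈ r0.toPath.1.edges := by
      have := hsub (hpq ▸ hmem)
      rcases List.mem_cons.mp this with h' | h'
      · exact absurd h' hne
      · exact h'
    have hr1 := hTcons t c r1.toPath.1 r0.toPath.1 r1.toPath.2 r0.toPath.2
    have hmem3 : s(a, b) ∈ r1.toPath.1.edges := hr1 ▸ hmem2
    exact (T t).mem_edgeSet.mp (r1.toPath.1.edges_subset_edgeSet hmem3)
  have htree : ∀ u : {z : V // z ≠ y}, (contract (T u.val) x y hxy).IsTree := by
    intro u
    constructor
    · haveI : Nonempty {z : V // z ≠ y} := ⟨⟨x, hxy⟩⟩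
      refine SimpleGraph.Connected.mk ?_
      intro a b
      obtain ⟨p⟩ := (hT u.val).2.isConnected.preconnected a.val b.val
      have := (projWalk hxy p).reachable
      rwa [proj_val, proj_val] at this
    · rw [isAcyclic_iff_forall_adj_isBridge]
      intro c d hcd
      obtain ⟨hne, a', b', hab, ha, hb⟩ := contract_adj.mp hcd
      rw [SimpleGraph.isBridge_iff]
      refine fun hreach => ?_
      subst ha hb
      have hne' : s(a', b') ≠ s(x, y) := fun h => hne (proj_eq_of_sym2_eq h)
      have hD : ((T u.val) \ fromEdgeSet {s(a', b')}).Adj x y := by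
        rw [SimpleGraph.sdiff_adj, fromEdgeSet_adj]
        refine ⟨hpers u.val, fun h => hne' h.1.symm⟩
      obtain ⟨w⟩ := hreach.mono contract_sdiff_le
      have h3 := reachable_of_contract_walk hD w
      have hbr := isAcyclic_iff_forall_adj_isBridge.mp (hT u.val).2.IsAcyclic hab
      rw [SimpleGraph.isBridge_iff] at hbr
      refine hbr ?_
      have r1 := reachable_proj (hxy := hxy) hD a'
      have r2 := reachable_proj (hxy := hxy) hD b'
      exact (r1.symm.trans h3).trans r2
  refine ⟨fun u => ⟨?_, htree u⟩, ?_, ?_⟩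
  · -- subgraph
    intro a b hab
    obtain ⟨hne, a', b', hab', ha, hb⟩ := contract_adj.mp hab
    exact contract_adj.mpr ⟨hne, a', b', (hT u.val).1 hab', ha, hb⟩
  · -- consistency
    intro u v p q hp hq
    obtain ⟨P0⟩ := (hT u.val).2.isConnected.preconnected u.val v.val
    obtain ⟨Q0⟩ := (hT v.val).2.isConnected.preconnected u.val v.val
    have hPQ : P0.toPath.1.edges = Q0.toPath.1.edges :=
      hTcons u.val v.val P0.toPath.1 Q0.toPath.1 P0.toPath.2 Q0.toPath.2
    have hPpath : (projWalk hxy P0.toPath.1).IsPath :=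
      isPath_projWalk P0.toPath.1 P0.toPath.2
        (fun hx hy =>
          mem_edges_of_mem_support (hT u.val).2.IsAcyclic (hpers u.val) P0.toPath.2 hx hy)
    have hQpath : (projWalk hxy Q0.toPath.1).IsPath :=
      isPath_projWalk Q0.toPath.1 Q0.toPath.2
        (fun hx hy =>
          mem_edges_of_mem_support (hT v.val).2.IsAcyclic (hpers v.val) Q0.toPath.2 hx hy)
    have hp' : p = (projWalk hxy P0.toPath.1).copy (proj_val u) (proj_val v) :=
      path_eq_of_isPath (htree u).IsAcyclic hp
        (by rw [SimpleGraph.Walk.isPath_copy]; exact hPpath)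
    have hq' : q = (projWalk hxy Q0.toPath.1).copy (proj_val u) (proj_val v) :=
      path_eq_of_isPath (htree v).IsAcyclic hq
        (by rw [SimpleGraph.Walk.isPath_copy]; exact hQpath)
    rw [hp', hq', SimpleGraph.Walk.edges_copy, SimpleGraph.Walk.edges_copy,
      edges_projWalk, edges_projWalk, hPQ]
  · -- identification of the two roots
    ext a b
    constructor
    · intro h
      obtain ⟨hne, a', b', hab, ha, hb⟩ := contract_adj.mp h
      have hne' : s(a', b') ≠ s(x, y) := fun hh => hne (ha ▸ hb ▸ proj_eq_of_sym2_eq hh)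
      exact contract_adj.mpr ⟨hne, a', b', key x y hpers a' b' hab hne', ha, hb⟩
    · intro h
      obtain ⟨hne, a', b', hab, ha, hb⟩ := contract_adj.mp h
      have hne' : s(a', b') ≠ s(y, x) := by
        rw [Sym2.eq_swap (a := y)]
        exact fun hh => hne (ha ▸ hb ▸ proj_eq_of_sym2_eq hh)
      exact contract_adj.mpr
        ⟨hne, a', b', key y x (fun c => (hpers c).symm) a' b' hab hne', ha, hb⟩
end

section
/- A function f from the vertices of the n-cycle C_n to its edges defines (as a tree system T_v = C_n minus the edge f(v)) a consistent path system if and only if for every pair of vertices x, y, either f(x) = f(y) or the vertex x together with the edge f(x) separate y from f(y) on the cycle. -/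
open SimpleGraph

variable {V : Type*}

/-- `x` together with the edge `ex` separate `y` from the edge `ey` on the cycle:
after deleting the edge `ex`, every walk from `y` to an endpoint of `ey`
passes through `x`. -/
def SeparatesCycle (n : ℕ) (x : Fin n) (ex : Sym2 (Fin n)) (y : Fin n)
    (ey : Sym2 (Fin n)) : Prop :=
  ∀ z ∈ ey, ∀ p : ((cycleGraph n).deleteEdges {ex}).Walk y z, x ∈ p.support

open scoped Fin.CommRing

namespace CCC
variable {n : ℕ} [NeZero n]

def dd (a z : Fin n) : ℕ := (z - a - 1).val

def zz (a : Fin n) (k : ℕ) : Fin n := a + 1 + (k : Fin n)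

lemma dd_lt (a z : Fin n) : dd a z < n := (z - a - 1).isLt

lemma zz_dd (a z : Fin n) : zz a (dd a z) = z := by
  simp only [zz, dd, Fin.cast_val_eq_self]
  ring

lemma dd_zz (a : Fin n) {k : ℕ} (hk : k < n) : dd a (zz a k) = k := by
  simp only [zz, dd]
  rw [show a + 1 + (k : Fin n) - a - 1 = (k : Fin n) by ring]
  exact Fin.val_cast_of_lt hk

lemma dd_inj {a z w : Fin n} (h : dd a z = dd a w) : z = w := by
  rw [← zz_dd a z, ← zz_dd a w, h]

lemma zz_add_n (a : Fin n) (k : ℕ) : zz a (k + n) = zz a k := by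
  simp [zz]

lemma zz_succ (a : Fin n) (k : ℕ) : zz a (k + 1) = zz a k + 1 := by
  simp only [zz, Nat.cast_add, Nat.cast_one]; ring

lemma cast_pred (hn : 1 ≤ n) : ((n - 1 : ℕ) : Fin n) = -1 := by
  have : ((n - 1 : ℕ) : Fin n) + 1 = 0 := by
    rw [show (1 : Fin n) = ((1:ℕ) : Fin n) by simp, ← Nat.cast_add]
    rw [show n - 1 + 1 = n by omega]
    simp
  linear_combination this

lemma zz_pred (a : Fin n) (hn : 1 ≤ n) : zz a (n - 1) = a := by
  rw [zz, cast_pred hn]; ring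

lemma dd_self (a : Fin n) : dd a a = n - 1 := by
  have h1 : 1 ≤ n := Nat.one_le_iff_ne_zero.mpr (NeZero.ne n)
  have := dd_zz a (k := n - 1) (by omega)
  rw [zz_pred a h1] at this; exact this

lemma dd_eq_pred_iff {a b : Fin n} : dd a b = n - 1 ↔ b = a := by
  constructor
  · intro h; rw [← dd_self a] at h; exact dd_inj h
  · rintro rfl; exact dd_self _

lemma dd_le_of_ne {a b : Fin n} (h : b ≠ a) : dd a b ≤ n - 2 := by
  have h1 := dd_lt a b
  have h2 : dd a b ≠ n - 1 := fun hc => h (dd_eq_pred_iff.mp hc)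
  omega

end CCC

namespace CCC
variable {n : ℕ} [NeZero n]

def delG (a : Fin n) : SimpleGraph (Fin n) := (cycleGraph n).deleteEdges {s(a, a+1)}

lemma val_one' (hn : 3 ≤ n) : (1 : Fin n).val = 1 := by
  rw [show (1 : Fin n) = ((1:ℕ):Fin n) by simp]
  exact Fin.val_cast_of_lt (by omega)

lemma two_ne_zero' (hn : 3 ≤ n) : (2 : Fin n) ≠ 0 := by
  intro h
  have : ((2:ℕ) : Fin n) = ((0:ℕ) : Fin n) := by simpa using h
  have := congrArg Fin.val this
  rw [Fin.val_cast_of_lt (by omega), Fin.val_cast_of_lt (by omega)] at this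
  omega

lemma edge_eq_iff (hn : 3 ≤ n) {a b : Fin n} :
    s(a, a + 1) = s(b, b + 1) ↔ a = b := by
  constructor
  · intro h
    rcases Sym2.eq_iff.mp h with ⟨h1, _⟩ | ⟨h1, h2⟩
    · exact h1
    · exfalso
      have h3 : a + 0 = a + 2 := by
        rw [add_zero]
        calc a = b + 1 := h1
        _ = (a + 1) + 1 := by rw [← h2]
        _ = a + 2 := by ring
      exact two_ne_zero' hn (add_left_cancel h3.symm)
  · rintro rfl; rfl

lemma edge_mem_normal (hn : 3 ≤ n) {e : Sym2 (Fin n)} (he : e ∈ (cycleGraph n).edgeSet) :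
    ∃ a : Fin n, e = s(a, a + 1) := by
  induction e using Sym2.ind with
  | _ x y =>
    rw [mem_edgeSet, cycleGraph_adj'] at he
    rcases he with h | h
    · refine ⟨y, ?_⟩
      have hxy : x = y + 1 := by
        have : x - y = (1 : Fin n) := by
          apply Fin.val_injective; rw [h, val_one' hn]
        linear_combination this
      rw [hxy, Sym2.eq_swap]
    · refine ⟨x, ?_⟩
      have hyx : y = x + 1 := by
        have : y - x = (1 : Fin n) := by
          apply Fin.val_injective; rw [h, val_one' hn]
        linear_combination this
      rw [hyx]

lemma delG_adj (hn : 3 ≤ n) {a u v : Fin n} :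
    (delG a).Adj u v ↔ (dd a v = dd a u + 1 ∨ dd a u = dd a v + 1) := by
  rw [delG, deleteEdges_adj, cycleGraph_adj', Set.mem_singleton_iff]
  constructor
  · rintro ⟨hc, hne⟩
    rcases hc with h | h
    · -- u = v + 1
      have huv : u = v + 1 := by
        have : u - v = (1 : Fin n) := by apply Fin.val_injective; rw [h, val_one' hn]
        linear_combination this
      have hv : v ≠ a := by
        rintro rfl; exact hne (by rw [huv, Sym2.eq_swap])
      right
      have hd : dd a v ≤ n - 2 := dd_le_of_ne hv
      have : u = zz a (dd a v + 1) := by rw [zz_succ, zz_dd a v, huv]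
      rw [this, dd_zz a (by omega)]
    · have hvu : v = u + 1 := by
        have : v - u = (1 : Fin n) := by apply Fin.val_injective; rw [h, val_one' hn]
        linear_combination this
      have hu : u ≠ a := by
        rintro rfl; exact hne (by rw [hvu])
      left
      have hd : dd a u ≤ n - 2 := dd_le_of_ne hu
      have : v = zz a (dd a u + 1) := by rw [zz_succ, zz_dd a u, hvu]
      rw [this, dd_zz a (by omega)]
  · intro h
    have key : ∀ w z : Fin n, dd a z = dd a w + 1 → (z - w).val = 1 ∧ s(w, z) ≠ s(a, a+1) := by
      intro w z hz
      have hwlt : dd a w ≤ n - 2 := by have := dd_lt a z; omega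
      have hw : w ≠ a := fun hc => by rw [hc, dd_self] at hz; have := dd_lt a z; omega
      have hzw : z = w + 1 := by
        rw [← zz_dd a z, hz, zz_succ, zz_dd a w]
      constructor
      · rw [hzw, show w + 1 - w = (1 : Fin n) by ring, val_one' hn]
      · rw [hzw]; intro hc; exact hw ((edge_eq_iff hn).mp hc)
    rcases h with h | h
    · obtain ⟨h1, h2⟩ := key u v h
      exact ⟨Or.inr h1, h2⟩
    · obtain ⟨h1, h2⟩ := key v u h
      refine ⟨Or.inl h1, ?_⟩
      rw [Sym2.eq_swap]; exact h2

end CCC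

namespace CCC
variable {n : ℕ} [NeZero n]

/-- the `t`-th edge of the cycle, as seen from cut `a` -/
def fa (a : Fin n) (t : ℕ) : Sym2 (Fin n) := s(zz a t, zz a (t+1))

def upWalk (hn : 3 ≤ n) (a : Fin n) : (i k : ℕ) → i + k < n → (delG a).Walk (zz a i) (zz a (i + k))
  | i, 0, _ => SimpleGraph.Walk.nil.copy rfl (by rw [Nat.add_zero])
  | i, k+1, h =>
    SimpleGraph.Walk.cons (by
      rw [delG_adj hn]
      left
      rw [dd_zz a (by omega : i < n), dd_zz a (by omega : i + 1 < n)])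
      ((upWalk hn a (i+1) k (by omega)).copy rfl (by congr 1; omega))

lemma upWalk_support (hn : 3 ≤ n) (a : Fin n) :
    ∀ (k i : ℕ) (h : i + k < n), (upWalk hn a i k h).support = (List.range' i (k+1)).map (zz a) := by
  intro k
  induction k with
  | zero =>
    intro i h
    simp [upWalk, List.range'_one]
  | succ k ih =>
    intro i h
    rw [show (upWalk hn a i (k+1) h) = SimpleGraph.Walk.cons _ ((upWalk hn a (i+1) k (by omega)).copy rfl (by congr 1; omega)) from rfl]
    rw [SimpleGraph.Walk.support_cons, SimpleGraph.Walk.support_copy, ih (i+1) (by omega)]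
    rw [List.range'_succ]
    rfl

lemma upWalk_edges (hn : 3 ≤ n) (a : Fin n) :
    ∀ (k i : ℕ) (h : i + k < n), (upWalk hn a i k h).edges = (List.range' i k).map (fa a) := by
  intro k
  induction k with
  | zero => intro i h; simp [upWalk]
  | succ k ih =>
    intro i h
    rw [show (upWalk hn a i (k+1) h) = SimpleGraph.Walk.cons _ ((upWalk hn a (i+1) k (by omega)).copy rfl (by congr 1; omega)) from rfl]
    rw [SimpleGraph.Walk.edges_cons, SimpleGraph.Walk.edges_copy, ih (i+1) (by omega)]
    rw [List.range'_succ]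
    rfl

lemma upWalk_isPath (hn : 3 ≤ n) (a : Fin n) (i k : ℕ) (h : i + k < n) :
    (upWalk hn a i k h).IsPath := by
  rw [SimpleGraph.Walk.isPath_def, upWalk_support]
  apply List.Nodup.map_on
  · intro x hx y hy hxy
    rw [List.mem_range'_1] at hx hy
    have : dd a (zz a x) = dd a (zz a y) := by rw [hxy]
    rwa [dd_zz a (by omega : x < n), dd_zz a (by omega : y < n)] at this
  · exact List.nodup_range'

def arcEdges (a u v : Fin n) : List (Sym2 (Fin n)) :=
  if dd a u ≤ dd a v then (List.range' (dd a u) (dd a v - dd a u)).map (fa a)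
  else ((List.range' (dd a v) (dd a u - dd a v)).map (fa a)).reverse

lemma arcEdges_asc {a u v : Fin n} (h : dd a u ≤ dd a v) :
    arcEdges a u v = (List.range' (dd a u) (dd a v - dd a u)).map (fa a) := if_pos h

lemma arcEdges_desc {a u v : Fin n} (h : dd a v ≤ dd a u) :
    arcEdges a u v = ((List.range' (dd a v) (dd a u - dd a v)).map (fa a)).reverse := by
  by_cases h' : dd a u ≤ dd a v
  · have heq : dd a u = dd a v := le_antisymm h' h
    rw [arcEdges_asc h', heq, Nat.sub_self]
    simp
  · exact if_neg h'

def toWalk (hn : 3 ≤ n) (a u v : Fin n) : (delG a).Walk u v :=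
  if h : dd a u ≤ dd a v then
    (upWalk hn a (dd a u) (dd a v - dd a u) (by have := dd_lt a v; omega)).copy (zz_dd a u)
      (by rw [show dd a u + (dd a v - dd a u) = dd a v from by omega, zz_dd])
  else
    ((upWalk hn a (dd a v) (dd a u - dd a v) (by have := dd_lt a u; omega)).copy (zz_dd a v)
      (by rw [show dd a v + (dd a u - dd a v) = dd a u from by omega, zz_dd])).reverse

lemma toWalk_isPath (hn : 3 ≤ n) (a u v : Fin n) : (toWalk hn a u v).IsPath := by
  rw [toWalk]
  split
  · rw [SimpleGraph.Walk.isPath_copy]; exact upWalk_isPath hn a _ _ _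
  · rw [SimpleGraph.Walk.isPath_reverse_iff, SimpleGraph.Walk.isPath_copy]
    exact upWalk_isPath hn a _ _ _

lemma toWalk_edges (hn : 3 ≤ n) (a u v : Fin n) : (toWalk hn a u v).edges = arcEdges a u v := by
  rw [toWalk]
  split
  next h =>
    rw [SimpleGraph.Walk.edges_copy, upWalk_edges, arcEdges_asc h]
  next h =>
    rw [SimpleGraph.Walk.edges_reverse, SimpleGraph.Walk.edges_copy, upWalk_edges,
      arcEdges_desc (by omega)]

lemma toWalk_mem_support (hn : 3 ≤ n) (a u v : Fin n) {x : Fin n}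
    (hx : x ∈ (toWalk hn a u v).support) :
    min (dd a u) (dd a v) ≤ dd a x ∧ dd a x ≤ max (dd a u) (dd a v) := by
  have key : ∀ (i k : ℕ) (h : i + k < n), x ∈ (List.range' i (k+1)).map (zz a) →
      i ≤ dd a x ∧ dd a x ≤ i + k := by
    intro i k h hmem
    obtain ⟨t, ht, hzt⟩ := List.mem_map.mp hmem
    rw [List.mem_range'_1] at ht
    have : dd a x = t := by rw [← hzt, dd_zz a (by omega : t < n)]
    omega
  rw [toWalk] at hx
  split at hx
  next h =>
    rw [SimpleGraph.Walk.support_copy, upWalk_support] at hx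
    have := key (dd a u) (dd a v - dd a u) (by have := dd_lt a v; omega) hx
    omega
  next h =>
    rw [SimpleGraph.Walk.support_reverse, List.mem_reverse, SimpleGraph.Walk.support_copy,
      upWalk_support] at hx
    have := key (dd a v) (dd a u - dd a v) (by have := dd_lt a u; omega) hx
    omega

lemma walk_between_mem_support (hn : 3 ≤ n) {a : Fin n} :
    ∀ {u v : Fin n} (p : (delG a).Walk u v) (k : ℕ),
      min (dd a u) (dd a v) ≤ k → k ≤ max (dd a u) (dd a v) → zz a k ∈ p.support
  | u, _, .nil, k, h1, h2 => by
    have : k = dd a u := by omega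
    rw [this, zz_dd]
    exact SimpleGraph.Walk.start_mem_support _
  | u, v, .cons (v := w) h q, k, h1, h2 => by
    rw [SimpleGraph.Walk.support_cons]
    by_cases hk : k = dd a u
    · rw [hk, zz_dd]; exact List.mem_cons_self
    · rw [delG_adj hn] at h
      refine List.mem_cons_of_mem _ (walk_between_mem_support hn q k ?_ ?_) <;> omega

lemma path_edges_eq (hn : 3 ≤ n) {a u v : Fin n} (p : (delG a).Walk u v) (hp : p.IsPath) :
    p.edges = arcEdges a u v := by
  induction p with
  | nil =>
    rw [SimpleGraph.Walk.edges_nil, arcEdges_asc le_rfl, Nat.sub_self]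
    rfl
  | @cons u w v h q ih =>
    rw [SimpleGraph.Walk.cons_isPath_iff] at hp
    obtain ⟨hq, hu⟩ := hp
    have hnb : ¬(min (dd a w) (dd a v) ≤ dd a u ∧ dd a u ≤ max (dd a w) (dd a v)) := by
      intro ⟨hb1, hb2⟩
      exact hu (by simpa [zz_dd] using walk_between_mem_support hn q (dd a u) hb1 hb2)
    have hadj := (delG_adj hn).mp h
    rw [SimpleGraph.Walk.edges_cons, ih hq]
    rcases hadj with hA | hB
    · -- dd a w = dd a u + 1, going up
      have huv : dd a u < dd a v := by omega
      rw [arcEdges_asc (by omega : dd a u ≤ dd a v), arcEdges_asc (by omega : dd a w ≤ dd a v)]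
      rw [show dd a v - dd a u = (dd a v - dd a w) + 1 from by omega, List.range'_succ]
      rw [List.map_cons]
      congr 1
      · show s(u, w) = fa a (dd a u)
        rw [fa, zz_dd, show zz a (dd a u + 1) = w from by rw [← hA, zz_dd]]
      · rw [hA]
    · -- dd a u = dd a w + 1, going down
      have hvu : dd a v < dd a u := by omega
      rw [arcEdges_desc (by omega : dd a v ≤ dd a u), arcEdges_desc (by omega : dd a v ≤ dd a w)]
      rw [show dd a u - dd a v = (dd a w - dd a v) + 1 from by omega, List.range'_concat]
      rw [List.map_append, List.reverse_append]
      simp only [List.map_cons, List.map_nil, List.reverse_cons, List.reverse_nil, List.nil_append]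
      rw [List.singleton_append]
      congr 1
      show s(u, w) = fa a (dd a v + 1 * (dd a w - dd a v))
      rw [one_mul, show dd a v + (dd a w - dd a v) = dd a w from by omega]
      rw [fa, zz_dd, show zz a (dd a w + 1) = u from by rw [← hB, zz_dd], Sym2.eq_swap]

end CCC

namespace CCC
variable {n : ℕ} [NeZero n]

/-- coordinate change between two cuts -/
lemma dd_sub_rel (hn : 3 ≤ n) {a b : Fin n} (hab : b ≠ a) (z : Fin n) :
    (dd a b + 1 ≤ dd a z ∧ dd b z = dd a z - (dd a b + 1)) ∨
    (dd a z ≤ dd a b ∧ dd b z = dd a z + n - (dd a b + 1)) := by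
  set r := dd a b with hr
  have hrle : r ≤ n - 2 := dd_le_of_ne hab
  have hb : b = zz a r := (zz_dd a b).symm
  have hc : ((r + 1 : ℕ) : Fin n).val = r + 1 := Fin.val_cast_of_lt (by omega)
  have hkey : z - b - 1 = (z - a - 1) - ((r+1 : ℕ) : Fin n) := by
    rw [hb, zz]
    push_cast
    ring
  have hX : dd b z = ((z - a - 1) - ((r+1 : ℕ) : Fin n)).val := by rw [dd, hkey]
  set X := z - a - 1 with hXdef
  set c : Fin n := ((r+1 : ℕ) : Fin n) with hcdef
  set D := X - c with hD
  have hXD : X = D + c := by rw [hD]; ring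
  have hval : X.val = (D.val + c.val) % n := by rw [hXD]; exact Fin.val_add D c
  have hdz : dd a z = X.val := rfl
  have hDlt : D.val < n := D.isLt
  have hclt : c.val < n := c.isLt
  rcases Nat.lt_or_ge (D.val + c.val) n with hlt | hge
  · rw [Nat.mod_eq_of_lt hlt] at hval
    left
    rw [hX]
    omega
  · rw [Nat.mod_eq_sub_mod hge, Nat.mod_eq_of_lt (by omega)] at hval
    right
    rw [hX]
    omega

lemma zz_zero (a : Fin n) : zz a 0 = a + 1 := by simp [zz]

lemma fa_shift (hn : 3 ≤ n) {a b : Fin n} (hab : b ≠ a) (t : ℕ) :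
    fa b t = fa a (t + (dd a b + 1)) := by
  obtain ⟨r, hr⟩ : ∃ r, dd a b = r := ⟨_, rfl⟩
  have hb : b = a + 1 + (r : Fin n) := by rw [← hr]; exact (zz_dd a b).symm
  have hzz : ∀ s : ℕ, zz b s = zz a (s + (r + 1)) := by
    intro s
    show b + 1 + (s : Fin n) = a + 1 + ((s + (r + 1) : ℕ) : Fin n)
    rw [hb]
    push_cast
    ring
  rw [hr, fa, fa, hzz, hzz, show t + 1 + (r + 1) = t + (r + 1) + 1 from by omega]

lemma fa_add_n (a : Fin n) (t : ℕ) : fa a (t + n) = fa a t := by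
  rw [fa, fa, zz_add_n, show t + n + 1 = (t+1) + n from by omega, zz_add_n]

lemma map_fa_add_n (a : Fin n) (s k : ℕ) :
    (List.range' (s + n) k).map (fa a) = (List.range' s k).map (fa a) := by
  rw [show s + n = n + s from by omega, ← List.map_add_range' (a := n) s k 1, List.map_map]
  apply List.map_congr_left
  intro t _
  show fa a (n + t) = fa a t
  rw [show n + t = t + n from by omega, fa_add_n]

lemma seg_eq (hn : 3 ≤ n) {a b : Fin n} (hab : b ≠ a) {s s' : ℕ} (k : ℕ)
    (h : s' + (dd a b + 1) = s ∨ s' + (dd a b + 1) = s + n) :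
    (List.range' s k).map (fa a) = (List.range' s' k).map (fa b) := by
  have h1 : (List.range' s' k).map (fa b) = (List.range' (s' + (dd a b + 1)) k).map (fa a) := by
    rw [show s' + (dd a b + 1) = (dd a b + 1) + s' from by omega,
      ← List.map_add_range' (a := dd a b + 1) s' k 1, List.map_map]
    apply List.map_congr_left
    intro t _
    show fa b t = fa a ((dd a b + 1) + t)
    rw [fa_shift hn hab t]
    congr 1
    omega
  rcases h with h | h
  · rw [h1, h]
  · rw [h1, h, map_fa_add_n]

/-- same-side condition implies the two arcs coincide -/
lemma arc_transfer (hn : 3 ≤ n) {a b u v : Fin n} (hab : b ≠ a)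
    (hss : (dd a u ≤ dd a b ∧ dd a v ≤ dd a b) ∨ (dd a b < dd a u ∧ dd a b < dd a v)) :
    arcEdges a u v = arcEdges b u v := by
  obtain hu' := dd_sub_rel hn hab u
  obtain hv' := dd_sub_rel hn hab v
  have hun := dd_lt a u
  have hvn := dd_lt a v
  have hbn := dd_lt a b
  have hsu : dd b u + (dd a b + 1) = dd a u ∨ dd b u + (dd a b + 1) = dd a u + n := by
    rcases hu' with ⟨h1, h2⟩ | ⟨h1, h2⟩
    · left; omega
    · right; omega
  have hsv : dd b v + (dd a b + 1) = dd a v ∨ dd b v + (dd a b + 1) = dd a v + n := by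
    rcases hv' with ⟨h1, h2⟩ | ⟨h1, h2⟩
    · left; omega
    · right; omega
  have horder : (dd a u ≤ dd a v ↔ dd b u ≤ dd b v) := by
    rcases hss with ⟨h1, h2⟩ | ⟨h1, h2⟩ <;>
      rcases hu' with ⟨h3, h4⟩ | ⟨h3, h4⟩ <;> rcases hv' with ⟨h5, h6⟩ | ⟨h5, h6⟩ <;>
      · constructor <;> intro <;> omega
  by_cases hle : dd a u ≤ dd a v
  · have hle' : dd b u ≤ dd b v := horder.mp hle
    rw [arcEdges_asc hle, arcEdges_asc hle']
    have hk : dd b v - dd b u = dd a v - dd a u := by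
      rcases hss with ⟨h1, h2⟩ | ⟨h1, h2⟩ <;> omega
    rw [hk]
    exact seg_eq hn hab _ (by rcases hss with ⟨h1, h2⟩ | ⟨h1, h2⟩ <;> omega)
  · have hle' : ¬ (dd b u ≤ dd b v) := fun hc => hle (horder.mpr hc)
    rw [arcEdges_desc (by omega), arcEdges_desc (by omega)]
    congr 1
    have hk : dd b u - dd b v = dd a u - dd a v := by
      rcases hss with ⟨h1, h2⟩ | ⟨h1, h2⟩ <;> omega
    rw [hk]
    exact seg_eq hn hab _ (by rcases hss with ⟨h1, h2⟩ | ⟨h1, h2⟩ <;> omega)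

lemma mem_arcEdges_of_between (hn : 3 ≤ n) {a u v c : Fin n}
    (h1 : min (dd a u) (dd a v) ≤ dd a c) (h2 : dd a c < max (dd a u) (dd a v)) :
    s(c, c + 1) ∈ arcEdges a u v := by
  have hfac : fa a (dd a c) = s(c, c+1) := by
    rw [fa, zz_dd, zz_succ, zz_dd]
  by_cases hle : dd a u ≤ dd a v
  · rw [arcEdges_asc hle]
    exact List.mem_map.mpr ⟨dd a c, List.mem_range'_1.mpr (by omega), hfac⟩
  · rw [arcEdges_desc (by omega), List.mem_reverse]
    exact List.mem_map.mpr ⟨dd a c, List.mem_range'_1.mpr (by omega), hfac⟩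

lemma not_self_mem_arcEdges (hn : 3 ≤ n) (a u v : Fin n) :
    s(a, a + 1) ∉ arcEdges a u v := by
  intro hmem
  have key : ∀ t : ℕ, t < n - 1 → fa a t ≠ s(a, a+1) := by
    intro t htn hfa
    rcases Sym2.eq_iff.mp hfa with ⟨e1, e2⟩ | ⟨e1, e2⟩
    · have h1 : dd a (zz a t) = dd a a := by rw [e1]
      rw [dd_zz a (by omega), dd_self] at h1
      omega
    · have h2 : dd a (zz a (t+1)) = dd a a := by rw [e2]
      rw [dd_zz a (by omega), dd_self] at h2
      have h1 : dd a (zz a t) = dd a (zz a 0) := by rw [e1, zz_zero]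
      rw [dd_zz a (by omega), dd_zz a (by omega)] at h1
      omega
  by_cases hle : dd a u ≤ dd a v
  · rw [arcEdges_asc hle] at hmem
    obtain ⟨t, ht, hfa⟩ := List.mem_map.mp hmem
    rw [List.mem_range'_1] at ht
    exact key t (by have := dd_lt a v; omega) hfa
  · rw [arcEdges_desc (by omega), List.mem_reverse] at hmem
    obtain ⟨t, ht, hfa⟩ := List.mem_map.mp hmem
    rw [List.mem_range'_1] at ht
    exact key t (by have := dd_lt a u; omega) hfa

end CCC

namespace CCC
variable {n : ℕ} [NeZero n]

lemma walk_cast {W : Type*} {G G' : SimpleGraph W} (h : G = G') {u v : W} (p : G.Walk u v) :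
    ∃ q : G'.Walk u v, q.edges = p.edges ∧ q.support = p.support ∧ (p.IsPath ↔ q.IsPath) := by
  subst h; exact ⟨p, rfl, rfl, Iff.rfl⟩

end CCC

section
open CCC

/-- a map `f` from vertices of `C_n` to its edges defines (via
`T v = C_n - f v`) a consistent path system iff for all `x y` either `f x = f y`
or `x` and `f x` separate `y` from `f y`. -/
theorem cycle_crossing_characterization
    (n : ℕ) (hn : 3 ≤ n) (f : Fin n → Sym2 (Fin n))
    (hf : ∀ v, f v ∈ (cycleGraph n).edgeSet) :
    TreeConsistent (fun v => (cycleGraph n).deleteEdges {f v}) ↔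
      ∀ x y : Fin n, f x = f y ∨ SeparatesCycle n x (f x) y (f y) := by
  haveI : NeZero n := ⟨by omega⟩
  choose g hg using fun v => edge_mem_normal hn (hf v)
  have hT : ∀ v, (cycleGraph n).deleteEdges {f v} = delG (g v) := by
    intro v; rw [hg v]; rfl
  have hfeq : ∀ x y, f x = f y ↔ g x = g y := by
    intro x y; rw [hg x, hg y]; exact edge_eq_iff hn
  constructor
  · intro tc x y
    have hSS : ∀ u w : Fin n, arcEdges (g u) u w = arcEdges (g w) u w := by
      intro u w
      obtain ⟨p, hpe, _, hpp⟩ := walk_cast (hT u).symm (toWalk hn (g u) u w)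
      obtain ⟨q, hqe, _, hqp⟩ := walk_cast (hT w).symm (toWalk hn (g w) u w)
      have := tc u w p q (hpp.mp (toWalk_isPath hn _ u w)) (hqp.mp (toWalk_isPath hn _ u w))
      rwa [hpe, hqe, toWalk_edges, toWalk_edges] at this
    have hsame : ∀ u w : Fin n,
        ¬(min (dd (g u) u) (dd (g u) w) ≤ dd (g u) (g w) ∧
          dd (g u) (g w) < max (dd (g u) u) (dd (g u) w)) := by
      intro u w
      by_cases hc : g w = g u
      · rw [hc, dd_self]
        rintro ⟨h1, h2⟩
        have := dd_lt (g u) u; have := dd_lt (g u) w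
        omega
      · rintro ⟨h1, h2⟩
        have h3 := hSS u w
        have h4 := not_self_mem_arcEdges hn (g w) u w
        rw [← h3] at h4
        exact h4 (mem_arcEdges_of_between hn h1 h2)
    by_cases hgc : g x = g y
    · left; exact (hfeq x y).mpr hgc
    right
    have hab : g y ≠ g x := fun hc => hgc hc.symm
    have hrb : dd (g x) (g y) ≤ n - 2 := dd_le_of_ne hab
    have hpn := dd_lt (g x) x
    have hqn := dd_lt (g x) y
    have F1 := hsame x y
    -- betweenness facts
    have hbtw : (min (dd (g x) y) (dd (g x) (g y)) ≤ dd (g x) x ∧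
          dd (g x) x ≤ max (dd (g x) y) (dd (g x) (g y))) ∧
        (min (dd (g x) y) (dd (g x) (g y) + 1) ≤ dd (g x) x ∧
          dd (g x) x ≤ max (dd (g x) y) (dd (g x) (g y) + 1)) := by
      by_cases hcase : dd (g x) y ≤ dd (g x) (g y)
      · -- case A : both on the low side
        have hpr : dd (g x) x ≤ dd (g x) (g y) := by omega
        by_cases hlt : dd (g x) x < dd (g x) y
        · exfalso
          set w := zz (g x) (dd (g x) (g y) + 1) with hw
          have hdw : dd (g x) w = dd (g x) (g y) + 1 := dd_zz (g x) (by omega)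
          have F2 := hsame x w
          have F3 := hsame y w
          have hrel_y := dd_sub_rel hn hab y
          have hrel_w := dd_sub_rel hn hab w
          have hrel_c := dd_sub_rel hn hab (g w)
          have hb1 := dd_lt (g x) (g w)
          have hb2 := dd_lt (g y) (g w)
          have hb3 := dd_lt (g y) y
          have hb4 := dd_lt (g y) w
          omega
        · omega
      · -- case B : both on the high side
        have hpr : dd (g x) (g y) < dd (g x) x := by omega
        by_cases hlt : dd (g x) y < dd (g x) x
        · exfalso
          have F2 := hsame x (g y)
          have F3 := hsame y (g y)
          have hrel_y := dd_sub_rel hn hab y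
          have hrel_c := dd_sub_rel hn hab (g (g y))
          have hdbb : dd (g y) (g y) = n - 1 := dd_self (g y)
          have hb1 := dd_lt (g x) (g (g y))
          have hb2 := dd_lt (g y) (g (g y))
          have hb3 := dd_lt (g y) y
          omega
        · omega
    -- now prove separation
    intro z hz pw
    rw [hg y] at hz
    have hz' : z = g y ∨ z = g y + 1 := Sym2.mem_iff.mp hz
    obtain ⟨q', hqe', hqs, hqp⟩ := walk_cast (hT x) pw
    have hxz : x = zz (g x) (dd (g x) x) := (zz_dd (g x) x).symm
    have hsucc : dd (g x) (g y + 1) = dd (g x) (g y) + 1 := by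
      have h5 : g y + 1 = zz (g x) (dd (g x) (g y) + 1) := by rw [zz_succ, zz_dd]
      rw [h5, dd_zz (g x) (by omega)]
    rcases hz' with rfl | rfl
    · have hm := walk_between_mem_support hn q' (dd (g x) x) (by omega) (by omega)
      rw [hqs] at hm
      rw [← hxz] at hm
      exact hm
    · have hm := walk_between_mem_support hn q' (dd (g x) x) (by omega) (by omega)
      rw [hqs] at hm
      rw [← hxz] at hm
      exact hm
  · intro hrhs u v pw qw hpw hqw
    obtain ⟨p', hpe, _, hpp⟩ := walk_cast (hT u) pw
    obtain ⟨q', hqe, _, hqp⟩ := walk_cast (hT v) qw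
    rw [← hpe, ← hqe, path_edges_eq hn p' (hpp.mp hpw), path_edges_eq hn q' (hqp.mp hqw)]
    by_cases hgc : g u = g v
    · rw [hgc]
    have hab : g v ≠ g u := fun h => hgc h.symm
    rcases hrhs u v with hfe | hsep
    · exact absurd ((hfeq u v).mp hfe) hgc
    apply arc_transfer hn hab
    have key : ∀ z : Fin n, z ∈ f v →
        min (dd (g u) v) (dd (g u) z) ≤ dd (g u) u ∧
          dd (g u) u ≤ max (dd (g u) v) (dd (g u) z) := by
      intro z hz
      obtain ⟨w', hwe, hws, hwp⟩ := walk_cast (hT u).symm (toWalk hn (g u) v z)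
      have hx := hsep z hz w'
      rw [hws] at hx
      exact toWalk_mem_support hn (g u) v z hx
    have h1 := key (g v) (by rw [hg v]; exact Sym2.mem_mk_left _ _)
    have h2 := key (g v + 1) (by rw [hg v]; exact Sym2.mem_mk_right _ _)
    have hrb : dd (g u) (g v) ≤ n - 2 := dd_le_of_ne hab
    have hsucc : dd (g u) (g v + 1) = dd (g u) (g v) + 1 := by
      have h5 : g v + 1 = zz (g u) (dd (g u) (g v) + 1) := by rw [zz_succ, zz_dd]
      rw [h5, dd_zz (g u) (by omega)]
    rw [hsucc] at h2
    have := dd_lt (g u) u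
    have := dd_lt (g u) v
    omega

end
end
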